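/- Let m be a continuous topological partial action of a Polish group G on a Polish space X. If A ⊆ X is open and V ⊆ G is a nonempty open set, then A^{△V} = ⋃_{g∈V} {x ∈ X_{g⁻¹} : g·x ∈ A}, and in particular A^{△V} is open in X. -/

import Mathlib

structure PartialAction (G : Type*) (X : Type*) [Group G] where
  dom : G → Set X
  act : G → X → X
  mem_dom_one : ∀ x, x ∈ dom 1
  act_one : ∀ x, act 1 x = x
  mem_dom_inv : ∀ g x, x ∈ dom g → act g x ∈ dom g⁻¹
  act_inv_act : ∀ g x, x ∈ dom g → act g⁻¹ (act g x) = x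
  mem_dom_mul : ∀ g h x, x ∈ dom h → act h x ∈ dom g → x ∈ dom (g * h)
  act_mul : ∀ g h x, x ∈ dom h → act h x ∈ dom g → act (g * h) x = act g (act h x)

namespace PartialAction

variable {G X : Type*} [Group G]

/-- The orbit equivalence relation `E^p_G` of a partial action. -/
def orbitRel (pa : PartialAction G X) (x y : X) : Prop :=
  ∃ g, x ∈ pa.dom g ∧ pa.act g x = y

/-- `G^x = {g : G | g · x is defined}`. -/
def stabDom (pa : PartialAction G X) (x : X) : Set G := {g | x ∈ pa.dom g}

/-- The orbit equivalence relation of the partial action `\widehat m` on `G × X`,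
`\widehat m_u (h, x) = (h u⁻¹, u · x)`. -/
def hatOrbitRel (pa : PartialAction G X) (p q : G × X) : Prop :=
  ∃ u, p.2 ∈ pa.dom u ∧ q = (p.1 * u⁻¹, pa.act u p.2)

/-- Vaught transform `A^{△V}`. -/
def vaughtDelta [TopologicalSpace G] (pa : PartialAction G X) (A : Set X) (V : Set G) : Set X :=
  {x | ¬ IsMeagre {g : ↥(V ∩ pa.stabDom x) | pa.act (g : G) x ∈ A}}

/-- Vaught transform `A^{*V}`. -/
def vaughtStar [TopologicalSpace G] (pa : PartialAction G X) (A : Set X) (V : Set G) : Set X :=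
  {x | {g : ↥(V ∩ pa.stabDom x) | pa.act (g : G) x ∈ A} ∈ residual ↥(V ∩ pa.stabDom x)}

end PartialAction

section Aux

/-- Preimage of a Gδ set under a continuous map is Gδ. -/
theorem isGδ_preimage_aux {α β : Type*} [TopologicalSpace α] [TopologicalSpace β]
    {f : α → β} (hf : Continuous f) {s : Set β} (hs : IsGδ s) : IsGδ (f ⁻¹' s) := by
  obtain ⟨T, hTo, hTc, rfl⟩ := hs
  rw [Set.sInter_eq_biInter, Set.preimage_iInter₂]
  exact IsGδ.biInter hTc fun t ht => ((hTo t ht).preimage hf).isGδ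

/-- A Gδ subset of a Polish space is a Polish space (mathlib 4.14 lacks this). -/
theorem isGδ_polishSpace_aux {α : Type*} [TopologicalSpace α] [PolishSpace α] {s : Set α}
    (hs : IsGδ s) : PolishSpace s := by
  obtain ⟨T, hTo, hTc, rfl⟩ := hs
  rcases T.eq_empty_or_nonempty with rfl | hne
  · rw [Set.sInter_empty]
    exact isClosed_univ.polishSpace
  obtain ⟨U, rfl⟩ := hTc.exists_eq_range hne
  have hU : ∀ n, IsOpen (U n) := fun n => hTo _ ⟨n, rfl⟩
  rw [Set.sInter_range]
  haveI : ∀ n, PolishSpace (U n) := fun n => (hU n).polishSpace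
  set s : Set α := ⋂ n, U n with hs
  have hmem : ∀ (x : s) (n : ℕ), (x : α) ∈ U n := fun x n => Set.mem_iInter.1 x.2 n
  let g : s → ∀ n, U n := fun x n => ⟨(x : α), hmem x n⟩
  have hgc : Continuous g := continuous_pi fun n => continuous_subtype_val.subtype_mk _
  have hcomp : (fun y : ∀ n, U n => (y 0 : α)) ∘ g = Subtype.val := rfl
  have hemb : Topology.IsEmbedding g := by
    apply Topology.IsEmbedding.of_comp hgc ((continuous_apply 0).subtype_val)
    rw [hcomp]
    exact Topology.IsEmbedding.subtypeVal
  have hrange : Set.range g = {y : ∀ n, U n | ∀ n, (y n : α) = (y 0 : α)} := by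
    ext y
    constructor
    · rintro ⟨x, rfl⟩ n; rfl
    · intro hy
      have hx : (y 0 : α) ∈ s := Set.mem_iInter.2 fun n => hy n ▸ (y n).2
      exact ⟨⟨(y 0 : α), hx⟩, funext fun n => Subtype.ext (hy n).symm⟩
  have hclosed : IsClosed (Set.range g) := by
    rw [hrange]
    have : {y : ∀ n, U n | ∀ n, (y n : α) = (y 0 : α)} =
        ⋂ n, {y : ∀ n, U n | (y n : α) = (y 0 : α)} := by
      ext y; simp [Set.mem_iInter]
    rw [this]
    exact isClosed_iInter fun n =>
      isClosed_eq ((continuous_apply n).subtype_val) ((continuous_apply 0).subtype_val)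
  exact (Topology.IsClosedEmbedding.mk hemb hclosed).polishSpace

/-- A nonempty open set in a Baire space is nonmeager. -/
theorem not_isMeagre_of_isOpen_aux {α : Type*} [TopologicalSpace α] [BaireSpace α]
    {s : Set α} (hs : IsOpen s) (hne : s.Nonempty) : ¬ IsMeagre s := by
  intro hm
  have hd : Dense sᶜ := dense_of_mem_residual hm
  have : interior s = ∅ := interior_eq_empty_iff_dense_compl.2 hd
  rw [hs.interior_eq] at this
  exact hne.ne_empty this

end Aux

/-- for a continuous partial action of a Polish group on a Polish space
(with `G*X` a `G_δ` set), if `A` is open then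
`A^{△V} = ⋃_{g ∈ V} {x ∈ X_{g⁻¹} : g · x ∈ A}`, which is an open set. -/

theorem vaughtDelta_open {G X : Type*} [Group G] [TopologicalSpace G] [IsTopologicalGroup G]
    [PolishSpace G] [TopologicalSpace X] [PolishSpace X]
    (pa : PartialAction G X)
    (hdom : ∀ g, IsOpen (pa.dom g))
    (hcont : ContinuousOn (fun p : G × X => pa.act p.1 p.2) {p : G × X | p.2 ∈ pa.dom p.1})
    (hGδ : IsGδ {p : G × X | p.2 ∈ pa.dom p.1})
    (A : Set X) (hA : IsOpen A) (V : Set G) (hV : V.Nonempty) (hVopen : IsOpen V) :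
    pa.vaughtDelta A V = ⋃ g ∈ V, {x : X | x ∈ pa.dom g ∧ pa.act g x ∈ A} ∧
    IsOpen (pa.vaughtDelta A V) := by
  have heq : pa.vaughtDelta A V = ⋃ g ∈ V, {x : X | x ∈ pa.dom g ∧ pa.act g x ∈ A} := by
    ext x
    simp only [PartialAction.vaughtDelta, Set.mem_setOf_eq, Set.mem_iUnion, exists_prop]
    constructor
    · intro h
      by_contra hc
      push_neg at hc
      apply h
      have hempty : {g : ↥(V ∩ pa.stabDom x) | pa.act (g : G) x ∈ A} = ∅ := by
        ext g
        simp only [Set.mem_setOf_eq, Set.mem_empty_iff_false, iff_false]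
        intro hg
        exact hc g.1 g.2.1 g.2.2 hg
      rw [hempty]
      exact IsMeagre.empty
    · rintro ⟨g, hgV, hgdom, hgA⟩
      set T : Set G := V ∩ pa.stabDom x with hT
      -- T is a Gδ set in a Polish space, hence Polish, hence Baire
      have hGδx : IsGδ (pa.stabDom x) := by
        have : pa.stabDom x = (fun g : G => (g, x)) ⁻¹' {p : G × X | p.2 ∈ pa.dom p.1} := rfl
        rw [this]
        exact isGδ_preimage_aux (continuous_id.prodMk continuous_const) hGδ
      have hGδT : IsGδ T := hVopen.isGδ.inter hGδx
      haveI : PolishSpace T := isGδ_polishSpace_aux hGδT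
      letI := TopologicalSpace.upgradeIsCompletelyMetrizable ↥T
      -- the set in question is open and nonempty in T
      have hfc : Continuous (fun u : ↥T => pa.act (u : G) x) := by
        have h1 : ContinuousOn (fun u : G => pa.act u x) (pa.stabDom x) := by
          have := hcont.comp (Continuous.continuousOn
            (continuous_id.prodMk continuous_const : Continuous (fun u : G => (u, x))))
            (fun u hu => hu)
          exact this
        have h2 : ContinuousOn (fun u : G => pa.act u x) T :=
          h1.mono Set.inter_subset_right
        exact h2.restrict
      have hSopen : IsOpen {u : ↥T | pa.act (u : G) x ∈ A} :=
        hA.preimage hfc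
      have hSne : {u : ↥T | pa.act (u : G) x ∈ A}.Nonempty :=
        ⟨⟨g, hgV, hgdom⟩, hgA⟩
      exact not_isMeagre_of_isOpen_aux hSopen hSne
  refine ⟨heq, ?_⟩
  rw [heq]
  apply isOpen_biUnion
  intro g _
  have hcg : ContinuousOn (fun y : X => pa.act g y) (pa.dom g) := by
    have := hcont.comp (Continuous.continuousOn
      (continuous_const.prodMk continuous_id : Continuous (fun y : X => (g, y))))
      (fun y hy => hy)
    exact this
  have : {x : X | x ∈ pa.dom g ∧ pa.act g x ∈ A} =
      pa.dom g ∩ (fun y : X => pa.act g y) ⁻¹' A := rfl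
  rw [this]
  exact hcg.isOpen_inter_preimage (hdom g) hA
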